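/- Let $M$ be a metric space and $f_0, f_1 : N \to M$ topological embeddings of a compact space $N$. Let $\{U_i\}_{i\ge 1}$ be a decreasing sequence of open sets with $\bigcap_{i\ge 1} U_i = f_0(N)$, and let $\{\psi_i\}_{i\ge 1}$ be a sequence of homeomorphisms of $M$ such that: (1) $\psi_i$ is supported inside $\varphi_{i-1}(U_i)$, where $\varphi_i = \psi_i \circ \cdots \circ \psi_1$, and $f_1(N) \subset \varphi_{i-1}(U_i)$; (2) $\sum_{i=1}^{\infty} d_{C^0}(\psi_i, \mathrm{Id}) < \infty$; (3) the sequence $\varphi_i \circ f_0$ converges uniformly to $f_1$. Then the sequence $\varphi_i$ converges uniformly to a continuous injective map $\varphi : M \to M$ satisfying $\varphi \circ f_0 = f_1$. -/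

import Mathlib

open Filter Set Topology

/-- uniform limit of compositions of homeomorphisms with summable
`C⁰`-distances, supported in shrinking neighbourhoods of `f₀(N)`, gives a continuous
injective map `φ` with `φ ∘ f₀ = f₁`. -/
theorem stmt0 {N M : Type*} [TopologicalSpace N] [CompactSpace N] [MetricSpace M]
    (f0 f1 : N → M) (hf0c : Continuous f0) (hf0i : Function.Injective f0)
    (hf1c : Continuous f1) (hf1i : Function.Injective f1)
    (U : ℕ → Set M) (hUopen : ∀ i, IsOpen (U i)) (hUdec : ∀ i, U (i + 1) ⊆ U i)
    (hUcap : (⋂ i, U (i + 1)) = Set.range f0)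
    (ψ : ℕ → M ≃ₜ M)
    (φ : ℕ → M → M) (hφ0 : φ 0 = id) (hφs : ∀ i, φ (i + 1) = ψ (i + 1) ∘ φ i)
    (hsupp : ∀ i, ∀ x, x ∉ φ i '' U (i + 1) → ψ (i + 1) x = x)
    (hrange : ∀ i, Set.range f1 ⊆ φ i '' U (i + 1))
    (C : ℕ → ℝ) (hC : ∀ i x, dist (ψ i x) x ≤ C i) (hCsum : Summable C)
    (hconv : TendstoUniformly (fun i => φ i ∘ f0) f1 Filter.atTop) :
    ∃ φ' : M → M, Continuous φ' ∧ Function.Injective φ' ∧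
      TendstoUniformly φ φ' Filter.atTop ∧ φ' ∘ f0 = f1 := by
  classical
  have hφinj : ∀ i, Function.Injective (φ i) := by
    intro i
    induction i with
    | zero => rw [hφ0]; exact fun a b h => h
    | succ n ih => rw [hφs]; exact (ψ (n + 1)).injective.comp ih
  have hφcont : ∀ i, Continuous (φ i) := by
    intro i
    induction i with
    | zero => rw [hφ0]; exact continuous_id
    | succ n ih => rw [hφs]; exact (ψ (n + 1)).continuous.comp ih
  have hUanti : Antitone U := antitone_nat_of_succ_le fun n => hUdec n
  -- the orbit of a point outside `U (k+1)` is eventually constant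
  have hconst : ∀ k x, x ∉ U (k + 1) → ∀ j, k ≤ j → φ j x = φ k x := by
    intro k x hx j hj
    induction j, hj using Nat.le_induction with
    | base => rfl
    | succ m hm ih =>
      rw [hφs]
      simp only [Function.comp_apply, ih]
      have hx' : x ∉ U (m + 1) := fun h => hx (hUanti (Nat.succ_le_succ hm) h)
      have hnm : φ k x ∉ φ m '' U (m + 1) := by
        rintro ⟨u, hu, hu2⟩
        have : φ m u = φ m x := by rw [hu2, ih]
        exact hx' (hφinj m this ▸ hu)
      exact hsupp m _ hnm
  -- pointwise convergence
  have hlim : ∀ x, ∃ L, Tendsto (fun i => φ i x) atTop (𝓝 L) := by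
    intro x
    by_cases hx : x ∈ Set.range f0
    · obtain ⟨n, rfl⟩ := hx
      exact ⟨f1 n, hconv.tendsto_at n⟩
    · rw [← hUcap] at hx
      simp only [Set.mem_iInter, not_forall] at hx
      obtain ⟨k, hk⟩ := hx
      exact ⟨φ k x, tendsto_atTop_of_eventually_const (i₀ := k)
        fun j hj => hconst k x hk j hj⟩
  -- uniform Cauchy
  have hsum' : Summable (fun j => C (j + 1)) := (summable_nat_add_iff 1).mpr hCsum
  set S : ℕ → ℝ := fun n => ∑ j ∈ Finset.range n, C (j + 1) with hS
  have hScauchy : CauchySeq S := hsum'.hasSum.tendsto_sum_nat.cauchySeq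
  have hdist : ∀ x n m, n ≤ m → dist (φ n x) (φ m x) ≤ S m - S n := by
    intro x n m hnm
    induction m, hnm using Nat.le_induction with
    | base => simp
    | succ m hm ih =>
      have h1 : dist (φ m x) (φ (m + 1) x) ≤ C (m + 1) := by
        rw [hφs]
        simp only [Function.comp_apply]
        rw [dist_comm]
        exact hC (m + 1) (φ m x)
      calc dist (φ n x) (φ (m + 1) x)
          ≤ dist (φ n x) (φ m x) + dist (φ m x) (φ (m + 1) x) := dist_triangle _ _ _
        _ ≤ (S m - S n) + C (m + 1) := add_le_add ih h1
        _ = S (m + 1) - S n := by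
            simp only [hS, Finset.sum_range_succ]; ring
  have hucauchy : UniformCauchySeqOn φ atTop Set.univ := by
    rw [Metric.uniformCauchySeqOn_iff]
    intro ε hε
    obtain ⟨K, hK⟩ := Metric.cauchySeq_iff.mp hScauchy ε hε
    refine ⟨K, fun m hm n hn x _ => ?_⟩
    rcases le_total m n with h | h
    · calc dist (φ m x) (φ n x) ≤ S n - S m := hdist x m n h
        _ ≤ |S n - S m| := le_abs_self _
        _ = dist (S n) (S m) := (Real.dist_eq _ _).symm
        _ < ε := hK n hn m hm
    · rw [dist_comm]
      calc dist (φ n x) (φ m x) ≤ S m - S n := hdist x n m h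
        _ ≤ |S m - S n| := le_abs_self _
        _ = dist (S m) (S n) := (Real.dist_eq _ _).symm
        _ < ε := hK m hm n hn
  choose φ' hφ' using hlim
  have htu : TendstoUniformly φ φ' atTop := by
    rw [← tendstoUniformlyOn_univ]
    exact hucauchy.tendstoUniformlyOn_of_tendsto (fun x _ => hφ' x)
  have hcomp : φ' ∘ f0 = f1 := by
    funext n
    exact tendsto_nhds_unique (hφ' (f0 n)) (hconv.tendsto_at n)
  have hcont : Continuous φ' := htu.continuous (Filter.Eventually.of_forall hφcont).frequently
  have hval : ∀ k x, x ∉ U (k + 1) → φ' x = φ k x := fun k x hx =>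
    tendsto_nhds_unique (hφ' x)
      (tendsto_atTop_of_eventually_const (i₀ := k) fun j hj => hconst k x hx j hj)
  have hnotin : ∀ k x, x ∉ U (k + 1) → φ' x ∉ φ k '' U (k + 1) := by
    intro k x hx hmem
    rw [hval k x hx] at hmem
    obtain ⟨u, hu, hu2⟩ := hmem
    exact hx (hφinj k hu2 ▸ hu)
  have houtk : ∀ x, x ∉ Set.range f0 → ∃ k, x ∉ U (k + 1) := by
    intro x hx
    rw [← hUcap] at hx
    simpa only [Set.mem_iInter, not_forall] using hx
  have hinj : Function.Injective φ' := by
    intro x y hxy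
    by_cases hx : x ∈ Set.range f0 <;> by_cases hy : y ∈ Set.range f0
    · obtain ⟨a, rfl⟩ := hx; obtain ⟨b, rfl⟩ := hy
      have h1 : f1 a = f1 b := by
        rw [← congrFun hcomp a, ← congrFun hcomp b]; exact hxy
      exact congrArg f0 (hf1i h1)
    · exfalso
      obtain ⟨a, rfl⟩ := hx
      obtain ⟨k, hk⟩ := houtk y hy
      have hmem : φ' y ∈ Set.range f1 := ⟨a, by rw [← hxy]; exact (congrFun hcomp a).symm⟩
      exact hnotin k y hk (hrange k hmem)
    · exfalso
      obtain ⟨a, rfl⟩ := hy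
      obtain ⟨k, hk⟩ := houtk x hx
      have hmem : φ' x ∈ Set.range f1 := ⟨a, by rw [hxy]; exact (congrFun hcomp a).symm⟩
      exact hnotin k x hk (hrange k hmem)
    · obtain ⟨k₁, hk₁⟩ := houtk x hx
      obtain ⟨k₂, hk₂⟩ := houtk y hy
      have hx' : x ∉ U (max k₁ k₂ + 1) :=
        fun h => hk₁ (hUanti (Nat.succ_le_succ (le_max_left _ _)) h)
      have hy' : y ∉ U (max k₁ k₂ + 1) :=
        fun h => hk₂ (hUanti (Nat.succ_le_succ (le_max_right _ _)) h)
      rw [hval _ x hx', hval _ y hy'] at hxy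
      exact hφinj _ hxy
  exact ⟨φ', hcont, hinj, htu, hcomp⟩
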